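/- Let X' and Y' be disjoint finite vertex sets of an induced path P, ordered along P, such that each vertex of X' has one or two neighbours in Y', no two vertices of X' have the same neighbourhood in Y', and the nonzero entries of each row of the bipartite adjacency matrix A_P[X',Y'] (rows ordered along P) appear consecutively, with at most one row per block having exactly one nonzero entry. Then the rows of A_P[X',Y'] are linearly independent over GF(2); in particular rank(A_P[X',Y']) = |X'|. -/

import Mathlib

open SimpleGraph
open Classical

/-- Sorted list of the tuple set `S^d`: tuples with entries in {1,3} except
the last entry which is in {1,2,3,4}, of length between 1 and `d`,
listed in lexicographic order. -/
def Tl : ℕ → List (List ℕ)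
  | 0 => []
  | k+1 => [[1]] ++ (Tl k).map (fun a => 1 :: a) ++ [[2], [3]]
            ++ (Tl k).map (fun a => 3 :: a) ++ [[4]]

/-- Strict lexicographic order on tuples (a proper prefix is smaller). -/
def lexLt (a b : List ℕ) : Prop := List.Lex (· < ·) a b

def lexLe (a b : List ℕ) : Prop := a = b ∨ lexLt a b

/-- `v` is the successor of `u` in the lexicographic order on `S^d`. -/
def IsSucc (d : ℕ) (u v : List ℕ) : Prop :=
  v ∈ Tl d ∧ lexLt u v ∧ ∀ w ∈ Tl d, lexLt u w → lexLe v w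

/-- The interval `[a,b]` in `S^d`. -/
def interval (d : ℕ) (a b : List ℕ) : Set (List ℕ) :=
  {c | c ∈ Tl d ∧ lexLe a c ∧ lexLe c b}

/-- `[a,b]` is a proper interval: no interior element has length `l(a)` or `l(b)`. -/
def ProperInterval (d : ℕ) (a b : List ℕ) : Prop :=
  a ∈ Tl d ∧ b ∈ Tl d ∧ lexLe a b ∧
  ∀ c ∈ interval d a b, c ≠ a → c ≠ b →
    c.length ≠ a.length ∧ c.length ≠ b.length

/-- The set of left endpoints of flat steps of the interval `[a,b]`. -/
def flatSteps (d : ℕ) (a b : List ℕ) : Set (List ℕ) :=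
  {c | c ∈ Tl d ∧ lexLe a c ∧ lexLt c b ∧ ∃ v, IsSucc d c v ∧ v.length = c.length}

/-- Vertices of `G_d`: elements of `S^d`, subdivision vertices, and centers. -/
inductive Vtx where
  | elt : List ℕ → Vtx
  | sub : ℕ → Fin 2 → Vtx
  | ctr : ℕ → Vtx
deriving DecidableEq

/-- The path `P_d` as a list of vertices: the elements of `S^d` in order,
with two subdivision vertices between consecutive elements of equal length
and one otherwise. -/
def pathList (d : ℕ) : List Vtx :=
  ((List.range (Tl d).length).zip (Tl d)).flatMap (fun p =>
    Vtx.elt p.2 :: (match (Tl d)[p.1 + 1]? with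
      | none => []
      | some b =>
        if p.2.length = b.length then [Vtx.sub p.1 0, Vtx.sub p.1 1]
        else [Vtx.sub p.1 0]))

/-- `x` and `y` are consecutive in the list `l`. -/
def ChainAdj {α : Type} (l : List α) (x y : α) : Prop :=
  ∃ i, (l[i]? = some x ∧ l[i+1]? = some y) ∨
       (l[i]? = some y ∧ l[i+1]? = some x)

/-- Adjacency from a center vertex. -/
def ctrAdj (d : ℕ) : Vtx → Vtx → Prop
  | Vtx.ctr k, Vtx.ctr m => k ≠ m ∧ 1 ≤ k ∧ k ≤ d ∧ 1 ≤ m ∧ m ≤ d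
  | Vtx.ctr k, Vtx.elt a => 1 ≤ k ∧ k ≤ d ∧ a ∈ Tl d ∧ a.length = k
  | _, _ => False

/-- The vertex set of `G_d`. -/
def VSet (d : ℕ) : Finset Vtx :=
  (pathList d).toFinset ∪ (Finset.Icc 1 d).image Vtx.ctr

def GdAdj (d : ℕ) (x y : Vtx) : Prop :=
  x ≠ y ∧ (ChainAdj (pathList d) x y ∨ ctrAdj d x y ∨ ctrAdj d y x)

/-- The graph `G_d`. -/
def Gd (d : ℕ) : SimpleGraph {x // x ∈ VSet d} where
  Adj x y := GdAdj d x.1 y.1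
  symm := ⟨by
    rintro x y ⟨hne, h⟩
    refine ⟨hne.symm, ?_⟩
    rcases h with ⟨i, hi⟩ | h | h
    · exact Or.inl ⟨i, hi.symm⟩
    · exact Or.inr (Or.inr h)
    · exact Or.inr (Or.inl h)⟩
  loopless := ⟨fun x h => h.1 rfl⟩

/-- A rank decomposition of a graph `G`: a finite cubic tree together with a
bijection from the vertices of `G` to the leaves of the tree. -/
structure RankDecomp {V : Type} [Fintype V] (G : SimpleGraph V) where
  t : Type
  fin : Fintype t
  tree : SimpleGraph t
  conn : tree.Connected
  acyc : tree.IsAcyclic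
  two_le : 2 ≤ Nat.card t
  cubic : ∀ v : t, (tree.neighborSet v).ncard = 1 ∨ (tree.neighborSet v).ncard = 3
  leafEquiv : V ≃ {v : t // (tree.neighborSet v).ncard = 1}

/-- The set of vertices of `G` whose leaf lies on the side of `a` of
the edge `ab` of the decomposition tree. -/
def RankDecomp.side {V : Type} [Fintype V] {G : SimpleGraph V}
    (D : RankDecomp G) (a b : D.t) : Set V :=
  {x | (D.tree.deleteEdges {s(a, b)}).Reachable (D.leafEquiv x).1 a}

/-- The cutrank function of `G`: the GF(2)-rank of the adjacency submatrix
between `X` and its complement. -/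
noncomputable def cutRank {V : Type} [Fintype V] (G : SimpleGraph V) (X : Set V) : ℕ :=
  haveI : Fintype ↥X := Fintype.ofFinite _
  haveI : Fintype ↥(Xᶜ) := Fintype.ofFinite _
  haveI : DecidableRel G.Adj := Classical.decRel _
  Matrix.rank (Matrix.of (fun (x : ↥X) (y : ↥(Xᶜ)) =>
    if G.Adj x.1 y.1 then (1 : ZMod 2) else 0))

/-- The decomposition `D` has width at most `k`. -/
def RankDecomp.WidthLE {V : Type} [Fintype V] {G : SimpleGraph V}
    (D : RankDecomp G) (k : ℕ) : Prop :=
  ∀ a b : D.t, D.tree.Adj a b → cutRank G (D.side a b) ≤ k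

/-- The rank-width of `G`. -/
noncomputable def rankwidth {V : Type} [Fintype V] (G : SimpleGraph V) : ℕ :=
  sInf {k | ∃ D : RankDecomp G, D.WidthLE k}

/-- `l` is an induced path in `G`: its vertices are distinct and two of them
are adjacent in `G` iff they are consecutive on `l`. -/
def IsInducedPathList {V : Type} (G : SimpleGraph V) (l : List V) : Prop :=
  l.Nodup ∧ ∀ x ∈ l, ∀ y ∈ l, (G.Adj x y ↔ ChainAdj l x y)

/-- The diamond: the complete graph on four vertices minus an edge. -/
def diamond : SimpleGraph (Fin 4) := (⊤ : SimpleGraph (Fin 4)).deleteEdges {s(2, 3)}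


theorem stmt18_aux {V : Type} [Fintype V] [DecidableEq V] (G : SimpleGraph V)
    [DecidableRel G.Adj]
    (l : List V) (hl : IsInducedPathList G l)
    (X' Y' : Finset V) (hX : ∀ x ∈ X', x ∈ l) (hY : ∀ y ∈ Y', y ∈ l)
    (hdisj : Disjoint X' Y')
    (hdeg : ∀ x ∈ X', (Y'.filter (fun y => G.Adj x y)).card = 1 ∨
                      (Y'.filter (fun y => G.Adj x y)).card = 2)
    (hdist : ∀ x ∈ X', ∀ x' ∈ X',
      Y'.filter (fun y => G.Adj x y) = Y'.filter (fun y => G.Adj x' y) → x = x')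
    (hblock : ∀ C : (G.induce (↑(X' ∪ Y') : Set V)).ConnectedComponent,
      (X'.filter (fun x => (Y'.filter (fun y => G.Adj x y)).card = 1 ∧
        ∀ h : x ∈ ↑(X' ∪ Y'),
          (G.induce (↑(X' ∪ Y') : Set V)).connectedComponentMk ⟨x, h⟩ = C)).card ≤ 1) :
    LinearIndependent (ZMod 2)
      (fun (x : ↥X') => (fun (y : ↥Y') => if G.Adj x.1 y.1 then (1 : ZMod 2) else 0)) := by
  classical
  have hnd := hl.1
  set idx : V → ℕ := fun v => List.idxOf v l with hidxdef
  have hstep : ∀ {i : ℕ} {x y : V}, x ∈ l → y ∈ l → l[i]? = some x →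
      l[i+1]? = some y → idx y = idx x + 1 := by
    intro i x y hx hy h1 h2
    have hi1 : i < l.length := (List.getElem?_eq_some_iff.mp h1).choose
    have hi2 : i + 1 < l.length := (List.getElem?_eq_some_iff.mp h2).choose
    have e1 : i = idx x := (List.getElem?_inj hi1 hnd).mp (by rw [h1, hidxdef]; exact (List.getElem?_idxOf hx).symm)
    have e2 : i + 1 = idx y := (List.getElem?_inj hi2 hnd).mp (by rw [h2, hidxdef]; exact (List.getElem?_idxOf hy).symm)
    omega
  have hadjidx : ∀ x ∈ l, ∀ y ∈ l, G.Adj x y →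
      idx y = idx x + 1 ∨ idx x = idx y + 1 := by
    intro x hx y hy hadj
    obtain ⟨i, h | h⟩ := (hl.2 x hx y hy).1 hadj
    · exact Or.inl (hstep hx hy h.1 h.2)
    · exact Or.inr (hstep hy hx h.1 h.2)
  have hidxinj : ∀ a ∈ l, ∀ b ∈ l, idx a = idx b → a = b := by
    intro a ha b hb h
    exact (List.idxOf_inj ha).mp h
  rw [Fintype.linearIndependent_iff]
  intro g hg
  by_contra hcon
  push_neg at hcon
  obtain ⟨x0, hx0⟩ := hcon
  -- pointwise form of the dependency
  have hg' : ∀ y : ↥Y', ∑ x : ↥X', g x * (if G.Adj x.1 y.1 then (1 : ZMod 2) else 0) = 0 := by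
    intro y
    have := congrFun hg y
    simpa [Finset.sum_apply, smul_eq_mul] using this
  -- key: a y covered exactly once by the support gives a contradiction
  have key : ∀ y ∈ Y', ∀ m : ↥X', g m ≠ 0 → G.Adj m.1 y →
      (∀ x : ↥X', g x ≠ 0 → G.Adj x.1 y → x = m) → False := by
    intro y hy m hgm hadj huniq
    have h0 := hg' ⟨y, hy⟩
    rw [Finset.sum_eq_single m] at h0
    · rw [if_pos hadj, mul_one] at h0
      exact hgm h0
    · intro x _ hxm
      by_cases hgx : g x = 0
      · rw [hgx, zero_mul]
      · by_cases ha : G.Adj x.1 y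
        · exact absurd (huniq x hgx ha) hxm
        · rw [if_neg ha, mul_zero]
    · intro h; exact absurd (Finset.mem_univ m) h
  have cm : ∀ x : ↥X', x.1 ∈ (↑(X' ∪ Y') : Set V) := by
    intro x
    simp only [Finset.coe_union, Set.mem_union, Finset.mem_coe]
    exact Or.inl x.2
  have cy : ∀ y ∈ Y', y ∈ (↑(X' ∪ Y') : Set V) := by
    intro y hy
    simp only [Finset.coe_union, Set.mem_union, Finset.mem_coe]
    exact Or.inr hy
  have compAdj : ∀ (a b : (↑(X' ∪ Y') : Set V)), G.Adj a.1 b.1 →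
      (G.induce (↑(X' ∪ Y') : Set V)).connectedComponentMk a =
      (G.induce (↑(X' ∪ Y') : Set V)).connectedComponentMk b := by
    intro a b h
    exact SimpleGraph.ConnectedComponent.sound (SimpleGraph.Adj.reachable
      (SimpleGraph.comap_adj.mpr h))
  have compEq : ∀ y ∈ Y', ∀ (a b : ↥X'), G.Adj a.1 y → G.Adj b.1 y →
      (G.induce (↑(X' ∪ Y') : Set V)).connectedComponentMk ⟨a.1, cm a⟩ =
      (G.induce (↑(X' ∪ Y') : Set V)).connectedComponentMk ⟨b.1, cm b⟩ := by
    intro y hy a b ha hb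
    have h1 := compAdj ⟨a.1, cm a⟩ ⟨y, cy y hy⟩ ha
    have h2 := compAdj ⟨b.1, cm b⟩ ⟨y, cy y hy⟩ hb
    rw [h1, h2]
  set B := (G.induce (↑(X' ∪ Y') : Set V)).connectedComponentMk ⟨x0.1, cm x0⟩ with hBdef
  set S' : Finset ↥X' := Finset.univ.filter (fun x => g x ≠ 0 ∧
      (G.induce (↑(X' ∪ Y') : Set V)).connectedComponentMk ⟨x.1, cm x⟩ = B) with hS'def
  have hx0S' : x0 ∈ S' := by
    rw [hS'def]
    exact Finset.mem_filter.mpr ⟨Finset.mem_univ x0, hx0, rfl⟩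
  have hS'g : ∀ x ∈ S', g x ≠ 0 := by
    intro x hx; exact ((Finset.mem_filter.mp hx).2).1
  have hS'B : ∀ x ∈ S', (G.induce (↑(X' ∪ Y') : Set V)).connectedComponentMk ⟨x.1, cm x⟩ = B := by
    intro x hx; exact ((Finset.mem_filter.mp hx).2).2
  obtain ⟨m, hmS', hmmin⟩ := S'.exists_min_image (fun x => idx x.1) ⟨x0, hx0S'⟩
  obtain ⟨M, hMS', hMmax⟩ := S'.exists_max_image (fun x => idx x.1) ⟨x0, hx0S'⟩
  have hgm := hS'g m hmS'
  have hgM := hS'g M hMS'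
  have hBm := hS'B m hmS'
  have hBM := hS'B M hMS'
  -- every Y'-neighbour of m is to its right
  have hmr : ∀ y ∈ Y', G.Adj m.1 y → idx y = idx m.1 + 1 := by
    intro y hy hadj
    rcases hadjidx m.1 (hX m.1 m.2) y (hY y hy) hadj with h | h
    · exact h
    · exfalso
      apply key y hy m hgm hadj
      intro x hgx hax
      rcases hadjidx x.1 (hX x.1 x.2) y (hY y hy) hax with h1 | h1
      · exfalso
        have hxS' : x ∈ S' := by
          rw [hS'def]
          refine Finset.mem_filter.mpr ⟨Finset.mem_univ x, hgx, ?_⟩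
          rw [compEq y hy x m hax hadj]
          exact hBm
        have := hmmin x hxS'
        omega
      · exact Subtype.ext (hidxinj x.1 (hX x.1 x.2) m.1 (hX m.1 m.2) (by omega))
  -- every Y'-neighbour of M is to its left
  have hMl : ∀ y ∈ Y', G.Adj M.1 y → idx M.1 = idx y + 1 := by
    intro y hy hadj
    rcases hadjidx M.1 (hX M.1 M.2) y (hY y hy) hadj with h | h
    · exfalso
      apply key y hy M hgM hadj
      intro x hgx hax
      rcases hadjidx x.1 (hX x.1 x.2) y (hY y hy) hax with h1 | h1
      · exact Subtype.ext (hidxinj x.1 (hX x.1 x.2) M.1 (hX M.1 M.2) (by omega))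
      · exfalso
        have hxS' : x ∈ S' := by
          rw [hS'def]
          refine Finset.mem_filter.mpr ⟨Finset.mem_univ x, hgx, ?_⟩
          rw [compEq y hy x M hax hadj]
          exact hBM
        have := hMmax x hxS'
        omega
    · exact h
  have hdegm : (Y'.filter (fun y => G.Adj m.1 y)).card = 1 := by
    rcases hdeg m.1 m.2 with h | h
    · exact h
    · exfalso
      have hle : (Y'.filter (fun y => G.Adj m.1 y)).card ≤ 1 := by
        rw [Finset.card_le_one]
        intro a ha b hb
        simp only [Finset.mem_filter] at ha hb
        have e1 := hmr a ha.1 ha.2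
        have e2 := hmr b hb.1 hb.2
        exact hidxinj a (hY a ha.1) b (hY b hb.1) (by omega)
      omega
  have hdegM : (Y'.filter (fun y => G.Adj M.1 y)).card = 1 := by
    rcases hdeg M.1 M.2 with h | h
    · exact h
    · exfalso
      have hle : (Y'.filter (fun y => G.Adj M.1 y)).card ≤ 1 := by
        rw [Finset.card_le_one]
        intro a ha b hb
        simp only [Finset.mem_filter] at ha hb
        have e1 := hMl a ha.1 ha.2
        have e2 := hMl b hb.1 hb.2
        exact hidxinj a (hY a ha.1) b (hY b hb.1) (by omega)
      omega
  -- both m and M lie in the block-filter for B, so m = M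
  have hmem : ∀ z : ↥X', (Y'.filter (fun y => G.Adj z.1 y)).card = 1 →
      (G.induce (↑(X' ∪ Y') : Set V)).connectedComponentMk ⟨z.1, cm z⟩ = B →
      z.1 ∈ X'.filter (fun x => (Y'.filter (fun y => G.Adj x y)).card = 1 ∧
        ∀ h : x ∈ ↑(X' ∪ Y'),
          (G.induce (↑(X' ∪ Y') : Set V)).connectedComponentMk ⟨x, h⟩ = B) := by
    intro z h1 h2
    refine Finset.mem_filter.mpr ⟨z.2, h1, ?_⟩
    intro h
    exact h2
  have hmM : m = M := by
    have := Finset.card_le_one.mp (hblock B) m.1 (hmem m hdegm hBm) M.1 (hmem M hdegM hBM)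
    exact Subtype.ext this
  -- hence S' = {m}
  have hS'm : ∀ x ∈ S', x = m := by
    intro x hx
    have h1 := hmmin x hx
    have h2 := hMmax x hx
    rw [← hmM] at h2
    exact Subtype.ext (hidxinj x.1 (hX x.1 x.2) m.1 (hX m.1 m.2) (by omega))
  -- the unique neighbour of m is covered exactly once: contradiction
  obtain ⟨y, hy⟩ := Finset.card_eq_one.mp hdegm
  have hymem : y ∈ Y'.filter (fun y => G.Adj m.1 y) := by
    rw [hy]; exact Finset.mem_singleton_self y
  have hyY : y ∈ Y' := (Finset.mem_filter.mp hymem).1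
  have hadjmy : G.Adj m.1 y := (Finset.mem_filter.mp hymem).2
  apply key y hyY m hgm hadjmy
  intro x hgx hax
  apply hS'm
  rw [hS'def]
  refine Finset.mem_filter.mpr ⟨Finset.mem_univ x, hgx, ?_⟩
  rw [compEq y hyY x m hax hadjmy]
  exact hBm

/-- If `X'`, `Y'` are disjoint vertex sets of an induced path `P`
such that every vertex of `X'` has one or two neighbours in `Y'`, no two
vertices of `X'` have the same neighbourhood in `Y'`, and within each block
(connected component of `P[X' ∪ Y']`) at most one vertex of `X'` has exactly
one neighbour in `Y'`, then the bipartite adjacency matrix `A_P[X',Y']` has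
linearly independent rows over GF(2); in particular its rank is `|X'|`. -/
theorem stmt18 {V : Type} [Fintype V] [DecidableEq V] (G : SimpleGraph V)
    [DecidableRel G.Adj]
    (l : List V) (hl : IsInducedPathList G l)
    (X' Y' : Finset V) (hX : ∀ x ∈ X', x ∈ l) (hY : ∀ y ∈ Y', y ∈ l)
    (hdisj : Disjoint X' Y')
    (hdeg : ∀ x ∈ X', (Y'.filter (fun y => G.Adj x y)).card = 1 ∨
                      (Y'.filter (fun y => G.Adj x y)).card = 2)
    (hdist : ∀ x ∈ X', ∀ x' ∈ X',
      Y'.filter (fun y => G.Adj x y) = Y'.filter (fun y => G.Adj x' y) → x = x')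
    (hblock : ∀ C : (G.induce (↑(X' ∪ Y') : Set V)).ConnectedComponent,
      (X'.filter (fun x => (Y'.filter (fun y => G.Adj x y)).card = 1 ∧
        ∀ h : x ∈ ↑(X' ∪ Y'),
          (G.induce (↑(X' ∪ Y') : Set V)).connectedComponentMk ⟨x, h⟩ = C)).card ≤ 1) :
    LinearIndependent (ZMod 2)
      (fun (x : ↥X') => (fun (y : ↥Y') => if G.Adj x.1 y.1 then (1 : ZMod 2) else 0)) ∧
    (Matrix.of (fun (x : ↥X') (y : ↥Y') =>
        if G.Adj x.1 y.1 then (1 : ZMod 2) else 0)).rank = X'.card := by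
  have hLI := stmt18_aux G l hl X' Y' hX hY hdisj hdeg hdist hblock
  refine ⟨hLI, ?_⟩
  rw [Matrix.rank_eq_finrank_span_row]
  have : Set.range (Matrix.of (fun (x : ↥X') (y : ↥Y') =>
      if G.Adj x.1 y.1 then (1 : ZMod 2) else 0)).row = Set.range
      (fun (x : ↥X') => (fun (y : ↥Y') => if G.Adj x.1 y.1 then (1 : ZMod 2) else 0)) := rfl
  rw [this, finrank_span_eq_card hLI, Fintype.card_coe]
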